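/- The reverse operation on compositions commutes with the composition product: reverse(β∘α) = reverse(β)∘reverse(α). -/

import Mathlib

/-- A composition: a nonempty list of positive integers. -/
def IsComposition (l : List ℕ) : Prop := l ≠ [] ∧ ∀ x ∈ l, 0 < x

/-- `Coarsens α β` : α is a coarsening of β, i.e. α is obtained from β by
summing blocks of consecutive components. -/
def Coarsens (α β : List ℕ) : Prop :=
  ∃ P : List (List ℕ), P.flatten = β ∧ (∀ p ∈ P, p ≠ []) ∧ α = P.map List.sum

/-- All ways of splitting a list into blocks of consecutive elements. -/
def splits : List ℕ → List (List (List ℕ))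
  | [] => [[]]
  | a :: rest =>
    (splits rest).flatMap fun s =>
      match s with
      | [] => [[[a]]]
      | b :: bs => [(a :: b) :: bs, [a] :: b :: bs]

/-- The list of all coarsenings of a composition. -/
def coarsenings (β : List ℕ) : List (List ℕ) :=
  (splits β).map (fun P => P.map List.sum)

/-- The L-polynomial of a composition, encoded as the multiset of monomials
`x_{λ(α)}` over coarsenings `α` of `β`; each monomial is recorded as the
multiset (partition) of the components of `α`. -/
def Lpoly (β : List ℕ) : Multiset (Multiset ℕ) :=
  ((coarsenings β).map fun α => (α : Multiset ℕ) : List (Multiset ℕ))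

/-- Near-concatenation of compositions. -/
def odot : List ℕ → List ℕ → List ℕ
  | [], β => β
  | [a], [] => [a]
  | [a], b :: bs => (a + b) :: bs
  | a :: b :: as, β => a :: odot (b :: as) β

/-- `odotPow α i` is the `i`-fold near-concatenation `α^{⊙i}`. -/
def odotPow (α : List ℕ) : ℕ → List ℕ
  | 0 => []
  | n + 1 => odot (odotPow α n) α

/-- The composition product `β ∘ α = α^{⊙β₁} · α^{⊙β₂} ⋯ α^{⊙β_k}`. -/
def circ (β α : List ℕ) : List ℕ :=
  (β.map (odotPow α)).flatten

/-- A trivial factorization `β ∘ γ`. -/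
def TrivialFact (β γ : List ℕ) : Prop :=
  β = [1] ∨ γ = [1] ∨ (β.length = 1 ∧ γ.length = 1) ∨
    ((∀ b ∈ β, b = 1) ∧ (∀ c ∈ γ, c = 1))

/-- A composition admitting only trivial factorizations. -/
def IrredComp (f : List ℕ) : Prop :=
  ∀ β γ : List ℕ, IsComposition β → IsComposition γ → f = circ β γ → TrivialFact β γ

/-- Product of a list of compositions under `∘` (with identity `[1]`). -/
def circList : List (List ℕ) → List ℕ
  | [] => [1]
  | f :: fs => circ f (circList fs)

/-- `fs` is an irreducible factorization of `α`:
all factors are irreducible compositions, and no consecutive product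
`α_i ∘ α_{i+1}` is a trivial factorization. -/
def IsIrredFactorization (α : List ℕ) (fs : List (List ℕ)) : Prop :=
  fs ≠ [] ∧ (∀ f ∈ fs, IsComposition f ∧ IrredComp f) ∧
    fs.Chain' (fun a b => ¬ TrivialFact a b) ∧ α = circList fs

/-- `N(γ) = |γ| - ℓ(γ)`. -/
def Nstat (γ : List ℕ) : ℕ := γ.sum - γ.length


lemma odot_nil_right : ∀ α : List ℕ, odot α [] = α
  | [] => rfl
  | [_] => rfl
  | a :: b :: as => by rw [show odot (a :: b :: as) [] = a :: odot (b :: as) [] from rfl,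
      odot_nil_right (b :: as)]

lemma odot_cons (a : ℕ) (as β : List ℕ) (h : as ≠ []) :
    odot (a :: as) β = a :: odot as β := by
  cases as with
  | nil => exact absurd rfl h
  | cons b bs => rfl

lemma odot_ne_nil : ∀ (α β : List ℕ), α ≠ [] → odot α β ≠ []
  | [], _, h => absurd rfl h
  | [a], [], _ => by simp [odot]
  | [a], b :: bs, _ => by simp [odot]
  | a :: b :: as, β, _ => by rw [odot_cons a (b :: as) β (by simp)]; simp

lemma odot_append_right : ∀ (x l m : List ℕ), l ≠ [] → odot x (l ++ m) = odot x l ++ m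
  | [], l, m, _ => rfl
  | [a], c :: cs, m, _ => rfl
  | a :: b :: bs, l, m, h => by
    rw [odot_cons a (b :: bs) _ (by simp), odot_cons a (b :: bs) l (by simp),
      odot_append_right (b :: bs) l m h, List.cons_append]

lemma odot_snoc : ∀ (l : List ℕ) (x y : ℕ) (ys : List ℕ),
    odot (l ++ [x]) (y :: ys) = l ++ (x + y) :: ys
  | [], x, y, ys => rfl
  | a :: l, x, y, ys => by
    rw [List.cons_append, odot_cons a (l ++ [x]) _ (by simp), odot_snoc l x y ys,
      List.cons_append]

lemma odot_reverse : ∀ (α β : List ℕ), (odot α β).reverse = odot β.reverse α.reverse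
  | [], β => by simp [odot, odot_nil_right]
  | [a], [] => by simp [odot, odot_nil_right]
  | [a], b :: bs => by
    show (odot [a] (b :: bs)).reverse = odot (b :: bs).reverse [a].reverse
    rw [show odot [a] (b :: bs) = (a + b) :: bs from rfl,
      show ([a] : List ℕ).reverse = [a] from rfl, List.reverse_cons (a := b) (as := bs), odot_snoc,
      List.reverse_cons, Nat.add_comm]
  | a :: b :: as, β => by
    rw [odot_cons a (b :: as) β (by simp), List.reverse_cons, odot_reverse (b :: as) β,
      ← odot_append_right β.reverse (b :: as).reverse [a] (by simp), ← List.reverse_cons]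

lemma odot_assoc : ∀ (a b c : List ℕ), odot (odot a b) c = odot a (odot b c)
  | [], b, c => rfl
  | [x], [], c => by rw [odot_nil_right]; rfl
  | [x], [y], [] => by simp [odot, odot_nil_right]
  | [x], [y], z :: zs => by simp [odot, Nat.add_assoc]
  | [x], y :: w :: ws, c => by
    show odot ((x + y) :: w :: ws) c = odot [x] (odot (y :: w :: ws) c)
    rw [odot_cons (x+y) (w :: ws) c (by simp), odot_cons y (w :: ws) c (by simp)]
    rfl
  | x :: y :: ys, b, c => by
    rw [odot_cons x (y :: ys) b (by simp),
      odot_cons x (odot (y :: ys) b) c (odot_ne_nil _ _ (by simp)),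
      odot_assoc (y :: ys) b c, ← odot_cons x (y :: ys) (odot b c) (by simp)]

lemma odot_odotPow_comm (α : List ℕ) : ∀ n, odot α (odotPow α n) = odot (odotPow α n) α
  | 0 => by rw [show odotPow α 0 = [] from rfl, odot_nil_right]; rfl
  | n + 1 => by
    rw [show odotPow α (n+1) = odot (odotPow α n) α from rfl, ← odot_assoc,
      odot_odotPow_comm α n]

lemma odotPow_reverse (α : List ℕ) : ∀ n, (odotPow α n).reverse = odotPow α.reverse n
  | 0 => rfl
  | n + 1 => by
    rw [show odotPow α (n+1) = odot (odotPow α n) α from rfl, odot_reverse,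
      odotPow_reverse α n, show odotPow α.reverse (n+1) = odot (odotPow α.reverse n) α.reverse
        from rfl, odot_odotPow_comm]

/-- The reverse operation commutes with the composition
product: `reverse (β ∘ α) = reverse β ∘ reverse α`. -/
theorem reverse_circ (β α : List ℕ) (hβ : IsComposition β) (hα : IsComposition α) :
    (circ β α).reverse = circ β.reverse α.reverse := by
  unfold circ
  rw [List.reverse_flatten, ← List.map_reverse (f := List.reverse), ← List.map_reverse (f := odotPow α), List.map_map]
  congr 1
  apply List.map_congr_left
  intro n _
  exact odotPow_reverse α n
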